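/- Let p be a prime, let A be an associative ring, and let z, z' ∈ A be such that z ≡ z' mod pA and the image of z in A/pA lies in the center Z(A/pA). Then for every k ≥ 0, z^{p^k} ≡ z'^{p^k} mod p^{k+1} A. -/

import Mathlib

/-- The congruence on `A` corresponding to the two-sided ideal `p^k A`
generated by `p^k`; its quotient is the ring `A/p^k A`. -/
def pPowCon (p k : ℕ) (A : Type*) [Ring A] : RingCon A :=
  (TwoSidedIdeal.span {(p : A) ^ k}).ringCon

section Aux

variable {A : Type*} [Ring A] (p : ℕ)

/-- `x` is divisible by `p^n` in `A`. -/
private def PD (n : ℕ) (x : A) : Prop := ∃ a : A, x = (p : A) ^ n * a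

private lemma comm_pow (a : A) (n : ℕ) : a * (p : A) ^ n = (p : A) ^ n * a :=
  ((Nat.cast_commute p a).pow_left n).eq.symm

private lemma PD.add {n : ℕ} {x y : A} (hx : PD p n x) (hy : PD p n y) : PD p n (x + y) := by
  obtain ⟨a, rfl⟩ := hx; obtain ⟨b, rfl⟩ := hy; exact ⟨a + b, (mul_add _ _ _).symm⟩

private lemma PD.neg {n : ℕ} {x : A} (hx : PD p n x) : PD p n (-x) := by
  obtain ⟨a, rfl⟩ := hx; exact ⟨-a, (mul_neg _ _).symm⟩

private lemma PD.sub {n : ℕ} {x y : A} (hx : PD p n x) (hy : PD p n y) : PD p n (x - y) := by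
  rw [sub_eq_add_neg]; exact hx.add p (hy.neg p)

private lemma PD.mul_left {n : ℕ} (x : A) {y : A} (hy : PD p n y) : PD p n (x * y) := by
  obtain ⟨a, rfl⟩ := hy
  exact ⟨x * a, by rw [← mul_assoc, comm_pow, mul_assoc]⟩

private lemma PD.mul_right {n : ℕ} {x : A} (y : A) (hx : PD p n x) : PD p n (x * y) := by
  obtain ⟨a, rfl⟩ := hx; exact ⟨a * y, by rw [mul_assoc]⟩

private lemma PD.mono {n m : ℕ} (h : n ≤ m) {x : A} (hx : PD p m x) : PD p n x := by
  obtain ⟨a, rfl⟩ := hx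
  exact ⟨(p : A) ^ (m - n) * a, by rw [← mul_assoc, ← pow_add, Nat.add_sub_cancel' h]⟩

private lemma PD.mul {n m : ℕ} {x y : A} (hx : PD p n x) (hy : PD p m y) :
    PD p (n + m) (x * y) := by
  obtain ⟨a, rfl⟩ := hx; obtain ⟨b, rfl⟩ := hy
  exact ⟨a * b, by rw [pow_add, mul_assoc, mul_assoc, ← mul_assoc a, comm_pow, mul_assoc]⟩

/-- Membership in the two-sided ideal generated by the central element `p^n`. -/
private lemma mem_span_pPow_iff (n : ℕ) (x : A) :
    x ∈ TwoSidedIdeal.span {(p : A) ^ n} ↔ PD p n x := by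
  constructor
  · intro h
    rw [TwoSidedIdeal.mem_span_iff] at h
    have := h (TwoSidedIdeal.mk' {x : A | PD p n x}
      (show PD p n (0 : A) from ⟨0, by simp⟩)
      (fun hx hy => hx.add p hy)
      (fun hx => hx.neg p)
      (fun hy => PD.mul_left p _ hy)
      (fun hx => PD.mul_right p _ hx))
      (by
        intro y hy
        rw [Set.mem_singleton_iff] at hy
        subst hy
        rw [SetLike.mem_coe, TwoSidedIdeal.mem_mk']
        exact ⟨1, (mul_one _).symm⟩)
    rwa [TwoSidedIdeal.mem_mk'] at this
  · rintro ⟨a, rfl⟩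
    exact TwoSidedIdeal.mul_mem_right _ _ _
      (TwoSidedIdeal.subset_span (Set.mem_singleton _))

/-- Restating the congruence in terms of divisibility. -/
private lemma pPowCon_mk'_eq_iff (n : ℕ) (x y : A) :
    (pPowCon p n A).mk' x = (pPowCon p n A).mk' y ↔ PD p n (x - y) := by
  rw [← mem_span_pPow_iff]
  exact (RingCon.eq _).trans (TwoSidedIdeal.rel_iff _ _ _)

/-- Commutators with powers of a central-mod-p element. -/
private lemma comm_pow_pd {x : A} (hx : ∀ a : A, PD p 1 (x * a - a * x)) (m : ℕ) :
    ∀ a : A, PD p 1 (x ^ m * a - a * x ^ m) := by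
  induction m with
  | zero => intro a; exact ⟨0, by simp⟩
  | succ m ih =>
    intro a
    have e1 : x ^ (m + 1) * a = x ^ m * (x * a) := by rw [pow_succ, mul_assoc]
    have e2 : a * x ^ (m + 1) = (a * x) * x ^ m := by rw [pow_succ', ← mul_assoc]
    have key : x ^ (m + 1) * a - a * x ^ (m + 1)
        = x ^ m * (x * a - a * x) + (x ^ m * (a * x) - (a * x) * x ^ m) := by
      rw [e1, e2, mul_sub, sub_add_sub_cancel]
    rw [key]
    exact ((hx _).mul_left p _).add p (ih (a * x))

/-- The key binomial estimate: `(x + e)^(n+1) = x^(n+1) + (n+1) (e x^n) + j`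
with `j ∈ p^(k+2) A`, provided `e ∈ p^(k+1) A` and `x` is central mod `p`. -/
private lemma binom (k : ℕ) {x e : A} (hx : ∀ a : A, PD p 1 (x * a - a * x))
    (he : PD p (k + 1) e) (n : ℕ) :
    ∃ j : A, PD p (k + 2) j ∧
      (x + e) ^ (n + 1) = x ^ (n + 1) + ((n + 1 : ℕ) : A) * (e * x ^ n) + j := by
  have hcomm : ∀ m : ℕ, PD p (k + 2) (x ^ m * e - e * x ^ m) := by
    intro m
    obtain ⟨u, hu⟩ := he
    have h1 : x ^ m * e - e * x ^ m
        = (p : A) ^ (k + 1) * (x ^ m * u - u * x ^ m) := by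
      rw [hu, mul_sub, ← mul_assoc, comm_pow, mul_assoc, mul_assoc]
    rw [h1]
    have h2 := PD.mul p (⟨1, (mul_one _).symm⟩ : PD p (k + 1) ((p : A) ^ (k + 1)))
      (comm_pow_pd p hx m u)
    rwa [show k + 1 + 1 = k + 2 from rfl] at h2
  induction n with
  | zero => exact ⟨0, ⟨0, by simp⟩, by simp⟩
  | succ n ih =>
    obtain ⟨j, hj, hjeq⟩ := ih
    have hee : PD p (k + 2) (e * x ^ n * e) := by
      have := PD.mul p (he.mul_right p (x ^ n)) he
      exact PD.mono p (by omega) this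
    refine ⟨(x ^ (n + 1) * e - e * x ^ (n + 1))
        + ((n + 1 : ℕ) : A) * (e * x ^ n * e) + (j * x + j * e),
      ((hcomm _).add p (PD.mul_left p _ hee)).add p
        ((hj.mul_right p _).add p (hj.mul_right p _)), ?_⟩
    have : (x + e) ^ (n + 1 + 1) = (x ^ (n + 1) + ((n + 1 : ℕ) : A) * (e * x ^ n) + j)
        * (x + e) := by rw [← hjeq, pow_succ]
    rw [this]
    push_cast
    noncomm_ring

/-- The key step: if `x ≡ y mod p^(k+1)` and `x` is central mod `p`,
then `x^p ≡ y^p mod p^(k+2)`. -/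
private lemma step (hp : 0 < p) (k : ℕ) {x y : A} (hx : ∀ a : A, PD p 1 (x * a - a * x))
    (hxy : PD p (k + 1) (y - x)) : PD p (k + 2) (y ^ p - x ^ p) := by
  obtain ⟨j, hj, hjeq⟩ := binom p k hx hxy (p - 1)
  rw [Nat.sub_add_cancel (Nat.succ_le_of_lt hp), show x + (y - x) = y from by abel] at hjeq
  rw [hjeq]
  have h1 : PD p (k + 2) (((p : ℕ) : A) * ((y - x) * x ^ (p - 1))) := by
    have := PD.mul p (⟨1, by rw [pow_one, mul_one]⟩ : PD p 1 ((p : ℕ) : A))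
      (hxy.mul_right p (x ^ (p - 1)))
    rwa [show 1 + (k + 1) = k + 2 by omega] at this
  have h2 := (h1.add p hj)
  have : x ^ p + ((p : ℕ) : A) * ((y - x) * x ^ (p - 1)) + j - x ^ p
      = ((p : ℕ) : A) * ((y - x) * x ^ (p - 1)) + j := by abel
  rwa [this]

end Aux

/-- Let `p` be a prime, `A` an associative ring, and `z, z' ∈ A` with `z ≡ z' mod pA`
and the image of `z` in `A/pA` central.  Then for every `k ≥ 0`,
`z^{p^k} ≡ z'^{p^k} mod p^{k+1} A`. -/
theorem pow_pPow_congruent_mod_pPow_succ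
    (p : ℕ) (hp : p.Prime) (A : Type*) [Ring A] (z z' : A)
    (hzz' : (pPowCon p 1 A).mk' z = (pPowCon p 1 A).mk' z')
    (hz : (pPowCon p 1 A).mk' z ∈ Subring.center (pPowCon p 1 A).Quotient)
    (k : ℕ) :
    (pPowCon p (k + 1) A).mk' (z ^ p ^ k) = (pPowCon p (k + 1) A).mk' (z' ^ p ^ k) := by
  have hzc : ∀ a : A, PD p 1 (z * a - a * z) := by
    intro a
    have h1 := Subring.mem_center_iff.mp hz ((pPowCon p 1 A).mk' a)
    rw [← map_mul, ← map_mul, pPowCon_mk'_eq_iff] at h1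
    have h2 := (h1.neg p)
    rwa [neg_sub] at h2
  rw [pPowCon_mk'_eq_iff]
  rw [pPowCon_mk'_eq_iff] at hzz'
  induction k with
  | zero => simpa using hzz'
  | succ k ih =>
    have hx : ∀ a : A, PD p 1 (z ^ p ^ k * a - a * z ^ p ^ k) := comm_pow_pd p hzc _
    have hxy : PD p (k + 1) (z' ^ p ^ k - z ^ p ^ k) := by
      have := ih.neg p; rwa [neg_sub] at this
    have hstep := step p hp.pos k hx hxy
    have h3 := hstep.neg p
    rw [neg_sub] at h3
    rwa [← pow_mul, ← pow_mul, ← pow_succ] at h3
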